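/- Let v : ℝ → ℝ be six times continuously differentiable, x₀ ∈ ℝ, and suppose v′(x₀) ≠ 0. For h > 0 define the cell averages v̄_j(h), j = −2, …, 2, and the Jiang–Shu smoothness indicators β₀(h), β₁(h), β₂(h). Set d₀ = 1/10, d₁ = 3/5, d₂ = 3/10, τ₅(h) = |β₀(h) − β₂(h)|, and (with ε = 0) define the WENO-Z quantities α_s(h) = d_s(1 + τ₅(h)/β_s(h)) and ω_s(h) = α_s(h)/(α₀(h) + α₁(h) + α₂(h)). Then there exists h₀ > 0 such that β_s(h) > 0 for all 0 < h < h₀ and s = 0, 1, 2, and for each s the difference ω_s(h) − d_s is O(h³) as h → 0⁺. -/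

import Mathlib

open Filter Topology Asymptotics

/-- Cell average of `v` over the cell `[x₀+(j-1/2)h, x₀+(j+1/2)h]`. -/
noncomputable def cellAvg (v : ℝ → ℝ) (x₀ h j : ℝ) : ℝ :=
  (1 / h) * ∫ t in (x₀ + (j - 1 / 2) * h)..(x₀ + (j + 1 / 2) * h), v t

/-- The Jiang–Shu smoothness indicator `β₀`. -/
noncomputable def beta0 (v : ℝ → ℝ) (x₀ h : ℝ) : ℝ :=
  (13 / 12) * (cellAvg v x₀ h (-2) - 2 * cellAvg v x₀ h (-1) + cellAvg v x₀ h 0) ^ 2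
    + (1 / 4) * (cellAvg v x₀ h (-2) - 4 * cellAvg v x₀ h (-1) + 3 * cellAvg v x₀ h 0) ^ 2

/-- The Jiang–Shu smoothness indicator `β₁`. -/
noncomputable def beta1 (v : ℝ → ℝ) (x₀ h : ℝ) : ℝ :=
  (13 / 12) * (cellAvg v x₀ h (-1) - 2 * cellAvg v x₀ h 0 + cellAvg v x₀ h 1) ^ 2
    + (1 / 4) * (cellAvg v x₀ h (-1) - cellAvg v x₀ h 1) ^ 2

/-- The Jiang–Shu smoothness indicator `β₂`. -/
noncomputable def beta2 (v : ℝ → ℝ) (x₀ h : ℝ) : ℝ :=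
  (13 / 12) * (cellAvg v x₀ h 0 - 2 * cellAvg v x₀ h 1 + cellAvg v x₀ h 2) ^ 2
    + (1 / 4) * (3 * cellAvg v x₀ h 0 - 4 * cellAvg v x₀ h 1 + cellAvg v x₀ h 2) ^ 2

/-- The vector of Jiang–Shu smoothness indicators. -/
noncomputable def betaV (v : ℝ → ℝ) (x₀ h : ℝ) : Fin 3 → ℝ :=
  ![beta0 v x₀ h, beta1 v x₀ h, beta2 v x₀ h]

/-- The linear weights of the fifth-order WENO reconstruction at the right cell boundary. -/
noncomputable def dLin : Fin 3 → ℝ := ![1 / 10, 3 / 5, 3 / 10]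

/-- The WENO-Z global smoothness indicator `τ₅ = |β₀ − β₂|`. -/
noncomputable def tau5 (v : ℝ → ℝ) (x₀ h : ℝ) : ℝ :=
  |beta0 v x₀ h - beta2 v x₀ h|

open Set in
lemma stmt16_taylor_aux (x₀ : ℝ) : ∀ (n : ℕ) (f : ℝ → ℝ), ContDiff ℝ n f → ∀ (M : ℝ),
    (∀ t ∈ Icc (x₀-1) (x₀+1), |iteratedDeriv n f t| ≤ M) →
    ∀ t ∈ Icc (x₀-1) (x₀+1),
      |f t - ∑ k ∈ Finset.range n, iteratedDeriv k f x₀ / (k.factorial : ℝ) * (t-x₀)^k|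
        ≤ M * |t-x₀|^n := by
  intro n
  induction n with
  | zero =>
    intro f hf M hM t ht
    simpa using hM t ht
  | succ n ih =>
    intro f hf M hM t ht
    have hf' : ContDiff ℝ ((n : WithTop ℕ∞) + 1) f := by exact_mod_cast hf
    have hdiff : Differentiable ℝ f := (contDiff_succ_iff_deriv.mp hf').1
    have hdf : ContDiff ℝ n (deriv f) := (contDiff_succ_iff_deriv.mp hf').2.2
    have hM' : ∀ t ∈ Icc (x₀-1) (x₀+1), |iteratedDeriv n (deriv f) t| ≤ M := by
      intro t ht
      rw [← iteratedDeriv_succ']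
      exact hM t ht
    have IH := ih (deriv f) hdf M hM'
    have hM0 : 0 ≤ M := by
      have h1 := IH (x₀+1) ⟨by linarith, le_refl _⟩
      simp only [add_sub_cancel_left, abs_one, one_pow, mul_one] at h1
      exact le_trans (abs_nonneg _) h1
    set a : ℕ → ℝ := fun k => iteratedDeriv k f x₀ / (k.factorial : ℝ) with ha
    set g : ℝ → ℝ := fun u => f u - ∑ k ∈ Finset.range (n+1), a k * (u-x₀)^k with hg
    set g' : ℝ → ℝ := fun u => deriv f u - ∑ k ∈ Finset.range n, a (k+1) * (k+1) * (u-x₀)^k with hg'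
    have hgd : ∀ u : ℝ, HasDerivAt g (g' u) u := by
      intro u
      have h1 : HasDerivAt (fun u : ℝ => u - x₀) 1 u := (hasDerivAt_id u).sub_const x₀
      have hsum : HasDerivAt (fun u : ℝ => ∑ k ∈ Finset.range (n+1), a k * (u-x₀)^k)
          (∑ k ∈ Finset.range (n+1), a k * ((k : ℝ) * (u-x₀)^(k-1) * 1)) u := by
        apply HasDerivAt.fun_sum
        intro k _
        exact (((hasDerivAt_pow k (u - x₀)).comp u h1)).const_mul (a k)
      have hre : (∑ k ∈ Finset.range (n+1), a k * ((k : ℝ) * (u-x₀)^(k-1) * 1))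
          = ∑ k ∈ Finset.range n, a (k+1) * (k+1) * (u-x₀)^k := by
        rw [Finset.sum_range_succ']
        simp only [Nat.cast_zero, zero_mul, mul_one, pow_zero, mul_zero, add_zero,
          Nat.add_sub_cancel]
        apply Finset.sum_congr rfl
        intro k _
        push_cast
        ring
      exact ((hdiff u).hasDerivAt.sub (hre ▸ hsum))
    have hbound : ∀ u ∈ uIcc x₀ t, |g' u| ≤ M * |t - x₀|^n := by
      intro u hu
      have hsub : uIcc x₀ t ⊆ Icc (x₀-1) (x₀+1) := by
        apply uIcc_subset_Icc (by constructor <;> linarith [ht.1, ht.2]) ht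
      have hu2 : |u - x₀| ≤ |t - x₀| := by
        rcases le_total x₀ t with hc | hc
        · rw [uIcc_of_le hc] at hu
          rw [abs_of_nonneg (by linarith [hu.1]), abs_of_nonneg (by linarith)]
          linarith [hu.2]
        · rw [uIcc_of_ge hc] at hu
          rw [abs_of_nonpos (by linarith [hu.2]), abs_of_nonpos (by linarith)]
          linarith [hu.1]
      have h3 : |g' u| ≤ M * |u - x₀|^n := by
        have := IH u (hsub hu)
        simp only [hg', ha]
        convert this using 3
        · apply Finset.sum_congr rfl
          intro k _
          rw [iteratedDeriv_succ', Nat.factorial_succ]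
          push_cast
          have : (k.factorial : ℝ) ≠ 0 := Nat.cast_ne_zero.mpr k.factorial_ne_zero
          field_simp
      calc |g' u| ≤ M * |u - x₀|^n := h3
        _ ≤ M * |t - x₀|^n := by
            apply mul_le_mul_of_nonneg_left _ hM0
            exact pow_le_pow_left₀ (abs_nonneg _) hu2 n
    have hgx₀ : g x₀ = 0 := by
      simp only [hg, Finset.sum_range_succ']
      simp [ha]
    have := Convex.norm_image_sub_le_of_norm_hasDerivWithin_le
      (f := g) (f' := g') (s := uIcc x₀ t) (C := M * |t - x₀|^n)
      (fun u hu => (hgd u).hasDerivWithinAt) hbound (convex_uIcc _ _)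
      left_mem_uIcc right_mem_uIcc
    rw [hgx₀, sub_zero] at this
    calc |g t| ≤ M * |t - x₀|^n * ‖t - x₀‖ := this
      _ = M * |t-x₀|^(n+1) := by rw [Real.norm_eq_abs, pow_succ]; ring

open Set in
lemma stmt16_cellAvg_poly (x₀ c0 c1 c2 c3 c4 c5 : ℝ) (h j : ℝ) :
    cellAvg (fun t => c0 + c1*(t-x₀) + c2*(t-x₀)^2 + c3*(t-x₀)^3 + c4*(t-x₀)^4 + c5*(t-x₀)^5)
      x₀ h j
    = (1/h) * ((fun u => c0*u + c1*u^2/2 + c2*u^3/3 + c3*u^4/4 + c4*u^5/5 + c5*u^6/6)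
        ((j + 1/2) * h)
      - (fun u => c0*u + c1*u^2/2 + c2*u^3/3 + c3*u^4/4 + c4*u^5/5 + c5*u^6/6)
        ((j - 1/2) * h)) := by
  unfold cellAvg
  congr 1
  have hderiv : ∀ t ∈ uIcc (x₀ + (j - 1/2) * h) (x₀ + (j + 1/2) * h),
      HasDerivAt (fun t => c0*(t-x₀) + c1*(t-x₀)^2/2 + c2*(t-x₀)^3/3 + c3*(t-x₀)^4/4
          + c4*(t-x₀)^5/5 + c5*(t-x₀)^6/6)
        (c0 + c1*(t-x₀) + c2*(t-x₀)^2 + c3*(t-x₀)^3 + c4*(t-x₀)^4 + c5*(t-x₀)^5) t := by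
    intro t _
    have h1 : HasDerivAt (fun t : ℝ => t - x₀) 1 t := (hasDerivAt_id t).sub_const x₀
    have hp : ∀ k : ℕ, HasDerivAt (fun t : ℝ => (t - x₀)^k) ((k:ℝ) * (t-x₀)^(k-1) * 1) t :=
      fun k => (hasDerivAt_pow k (t - x₀)).comp t h1
    have := ((((((hp 1).const_mul c0).add (((hp 2).const_mul c1).div_const 2)).add
      (((hp 3).const_mul c2).div_const 3)).add (((hp 4).const_mul c3).div_const 4)).add
      (((hp 5).const_mul c4).div_const 5)).add (((hp 6).const_mul c5).div_const 6)
    refine (this.congr_deriv ?_).congr_of_eventuallyEq (Filter.Eventually.of_forall fun u => ?_)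
    · norm_num; ring
    · simp only [Pi.add_apply]; ring
  have hcont : Continuous (fun t : ℝ => c0 + c1*(t-x₀) + c2*(t-x₀)^2 + c3*(t-x₀)^3
      + c4*(t-x₀)^4 + c5*(t-x₀)^5) := by continuity
  rw [intervalIntegral.integral_eq_sub_of_hasDerivAt hderiv
    (hcont.intervalIntegrable _ _)]
  simp only
  ring

open Set in
lemma stmt16_cell_err (v T : ℝ → ℝ) (hv : Continuous v) (hT : Continuous T) (x₀ M : ℝ)
    (hM : ∀ t ∈ Icc (x₀-1) (x₀+1), |v t - T t| ≤ M * |t-x₀|^6) (j : ℝ) (hj : |j| ≤ 2)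
    (h : ℝ) (h0 : 0 < h) (h1 : h ≤ 1/3) :
    |cellAvg v x₀ h j - cellAvg T x₀ h j| ≤ M * (5/2)^6 * h^6 := by
  have hM0 : 0 ≤ M := by
    have := hM (x₀+1) ⟨by linarith, le_refl _⟩
    have h2 : |(x₀+1) - x₀| = 1 := by norm_num
    rw [h2] at this
    simpa using le_trans (abs_nonneg _) this
  set a := x₀ + (j - 1/2) * h with ha
  set b := x₀ + (j + 1/2) * h with hb
  have hab : a ≤ b := by simp only [ha, hb]; nlinarith
  have hdiff : cellAvg v x₀ h j - cellAvg T x₀ h j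
      = (1/h) * ∫ t in a..b, (v t - T t) := by
    unfold cellAvg
    rw [intervalIntegral.integral_sub (hv.intervalIntegrable _ _) (hT.intervalIntegrable _ _)]
    ring
  have hjb : |j - 1/2| ≤ 5/2 ∧ |j + 1/2| ≤ 5/2 := by
    constructor <;> (rw [abs_le] at hj ⊢; constructor <;> linarith [hj.1, hj.2])
  have hbound : ∀ t ∈ uIoc a b, ‖v t - T t‖ ≤ M * (5/2 * h)^6 := by
    intro t htm
    rw [uIoc_of_le hab] at htm
    have ht1 : |t - x₀| ≤ 5/2 * h := by
      rw [abs_le]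
      constructor
      · have h2 := htm.1
        have h3 := mul_le_mul_of_nonneg_right (abs_le.mp hjb.1).1 h0.le
        simp only [ha] at h2
        linarith
      · have h2 := htm.2
        have h3 := mul_le_mul_of_nonneg_right (abs_le.mp hjb.2).2 h0.le
        simp only [hb] at h2
        linarith
    have ht2 : t ∈ Icc (x₀-1) (x₀+1) := by
      rw [abs_le] at ht1
      constructor <;> nlinarith [ht1.1, ht1.2]
    calc ‖v t - T t‖ = |v t - T t| := rfl
      _ ≤ M * |t - x₀|^6 := hM t ht2
      _ ≤ M * (5/2 * h)^6 := by
          apply mul_le_mul_of_nonneg_left _ hM0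
          exact pow_le_pow_left₀ (abs_nonneg _) ht1 6
  have hint := intervalIntegral.norm_integral_le_of_norm_le_const hbound
  have hba : |b - a| = h := by
    simp only [ha, hb]
    rw [abs_of_nonneg (by nlinarith)]
    ring
  rw [hdiff, abs_mul, abs_of_nonneg (by positivity : (0:ℝ) ≤ 1/h)]
  rw [hba] at hint
  calc 1/h * |∫ t in a..b, (v t - T t)| ≤ 1/h * (M * (5/2*h)^6 * h) := by
        apply mul_le_mul_of_nonneg_left hint (by positivity)
    _ = M * (5/2)^6 * h^6 := by field_simp

lemma stmt16_abs_lin3 {e1 e2 e3 E : ℝ} (h1 : |e1| ≤ E) (h2 : |e2| ≤ E) (h3 : |e3| ≤ E)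
    (p q r : ℝ) : |p*e1 + q*e2 + r*e3| ≤ (|p|+|q|+|r|)*E := by
  have hE : 0 ≤ E := le_trans (abs_nonneg _) h1
  calc |p*e1 + q*e2 + r*e3| ≤ |p*e1 + q*e2| + |r*e3| := abs_add_le _ _
    _ ≤ |p*e1| + |q*e2| + |r*e3| := by linarith [abs_add_le (p*e1) (q*e2)]
    _ = |p| * |e1| + |q| * |e2| + |r| * |e3| := by rw [abs_mul, abs_mul, abs_mul]
    _ ≤ |p| * E + |q| * E + |r| * E := by
        have b1 := mul_le_mul_of_nonneg_left h1 (abs_nonneg p)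
        have b2 := mul_le_mul_of_nonneg_left h2 (abs_nonneg q)
        have b3 := mul_le_mul_of_nonneg_left h3 (abs_nonneg r)
        linarith
    _ = (|p|+|q|+|r|)*E := by ring

lemma stmt16_sq_perturb {a e A E : ℝ} (ha : |a| ≤ A) (he : |e| ≤ E) :
    |(a+e)^2 - a^2| ≤ E*(2*A+E) := by
  have h1 : (a+e)^2 - a^2 = e*(2*a+e) := by ring
  have hE : 0 ≤ E := le_trans (abs_nonneg _) he
  rw [h1, abs_mul]
  have h2 : |2*a+e| ≤ 2*A+E := by
    calc |2*a+e| ≤ |2*a| + |e| := abs_add_le _ _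
      _ = 2*|a| + |e| := by rw [abs_mul]; norm_num
      _ ≤ 2*A+E := by linarith
  exact mul_le_mul he h2 (abs_nonneg _) hE

lemma stmt16_weight_bound (d0 d1 d2 u0 u1 u2 X : ℝ)
    (hd0 : 0 < d0) (hd1 : 0 < d1) (hd2 : 0 < d2) (hsum : d0 + d1 + d2 = 1)
    (h0 : 0 ≤ u0) (h1 : 0 ≤ u1) (h2 : 0 ≤ u2)
    (hu0 : u0 ≤ X) (hu1 : u1 ≤ X) (hu2 : u2 ≤ X) :
    |d0*(1+u0) / (d0*(1+u0) + d1*(1+u1) + d2*(1+u2)) - d0| ≤ X := by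
  set S := d0*(1+u0)+d1*(1+u1)+d2*(1+u2) with hSdef
  have hX0 : 0 ≤ X := le_trans h0 hu0
  have hS : S = 1 + (d0*u0 + d1*u1 + d2*u2) := by
    simp only [hSdef]
    linear_combination hsum
  have hS1 : 1 ≤ S := by nlinarith
  have hSpos : 0 < S := by linarith
  have key : d0*(1+u0)/S - d0 = d0*(u0 - (d0*u0 + d1*u1 + d2*u2))/S := by
    rw [eq_div_iff (ne_of_gt hSpos)]
    rw [sub_mul, div_mul_cancel₀ _ (ne_of_gt hSpos), hS]
    ring
  rw [key, abs_div, abs_of_pos hSpos, div_le_iff₀ hSpos]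
  have hw : d0*u0 + d1*u1 + d2*u2 ≤ X := by nlinarith
  have hw0 : 0 ≤ d0*u0 + d1*u1 + d2*u2 := by positivity
  have hnum : |d0*(u0 - (d0*u0+d1*u1+d2*u2))| ≤ d0 * X := by
    rw [abs_mul, abs_of_pos hd0]
    apply mul_le_mul_of_nonneg_left _ hd0.le
    rw [abs_le]
    constructor <;> nlinarith
  calc |d0*(u0 - (d0*u0+d1*u1+d2*u2))| ≤ d0 * X := hnum
    _ ≤ X * 1 := by nlinarith
    _ ≤ X * S := by nlinarith
set_option maxHeartbeats 4000000 in
/-- At a non-critical point (`v′(x₀) ≠ 0`) of a `C⁶` function, the smoothness indicators are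
eventually positive and the WENO-Z nonlinear weights (with `ε = 0`) satisfy
`ω_s − d_s = O(h³)` as `h → 0⁺`. -/
theorem stmt16 (v : ℝ → ℝ) (hv : ContDiff ℝ 6 v) (x₀ : ℝ) (hx : deriv v x₀ ≠ 0) :
    ∃ h₀ : ℝ, 0 < h₀ ∧
      (∀ h : ℝ, 0 < h → h < h₀ → ∀ s : Fin 3, 0 < betaV v x₀ h s) ∧
      (∀ s : Fin 3,
        (fun h : ℝ =>
            (dLin s * (1 + tau5 v x₀ h / betaV v x₀ h s))
              / (∑ r : Fin 3, dLin r * (1 + tau5 v x₀ h / betaV v x₀ h r)) - dLin s)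
          =O[𝓝[>] (0 : ℝ)] (fun h => h ^ 3)) := by
  classical
  set L := 𝓝[>] (0:ℝ) with hL
  obtain ⟨c0, hc0⟩ : ∃ x : _, x = v x₀ := ⟨_, rfl⟩
  obtain ⟨c1, hc1⟩ : ∃ x : _, x = deriv v x₀ := ⟨_, rfl⟩
  rw [← hc1] at hx
  obtain ⟨c2, hc2⟩ : ∃ x : _, x = iteratedDeriv 2 v x₀ / 2 := ⟨_, rfl⟩
  obtain ⟨c3, hc3⟩ : ∃ x : _, x = iteratedDeriv 3 v x₀ / 6 := ⟨_, rfl⟩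
  obtain ⟨c4, hc4⟩ : ∃ x : _, x = iteratedDeriv 4 v x₀ / 24 := ⟨_, rfl⟩
  obtain ⟨c5, hc5⟩ : ∃ x : _, x = iteratedDeriv 5 v x₀ / 120 := ⟨_, rfl⟩
  obtain ⟨T, hTdef⟩ : ∃ x : ℝ → ℝ, x = fun t => c0 + c1*(t-x₀) + c2*(t-x₀)^2 + c3*(t-x₀)^3
      + c4*(t-x₀)^4 + c5*(t-x₀)^5 := ⟨_, rfl⟩
  have hTcont : Continuous T := by rw [hTdef]; fun_prop
  -- bound on the sixth derivative
  have hcont6 : Continuous (iteratedDeriv 6 v) :=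
    hv.continuous_iteratedDeriv 6 (le_refl _)
  obtain ⟨M, hM⟩ := (isCompact_Icc (a := x₀-1) (b := x₀+1)).exists_bound_of_continuousOn
    hcont6.continuousOn
  -- Taylor bound
  have htay : ∀ t ∈ Set.Icc (x₀-1) (x₀+1), |v t - T t| ≤ M * |t-x₀|^6 := by
    have hbase := stmt16_taylor_aux x₀ 6 v (by exact_mod_cast hv) M (fun t ht => hM t ht)
    intro t ht
    have h2 := hbase t ht
    have hsum : (∑ k ∈ Finset.range 6, iteratedDeriv k v x₀ / (k.factorial : ℝ) * (t-x₀)^k)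
        = T t := by
      simp only [Finset.sum_range_succ, Finset.sum_range_zero, hTdef]
      simp only [iteratedDeriv_zero, iteratedDeriv_one, Nat.factorial]
      push_cast
      rw [hc0, hc1, hc2, hc3, hc4, hc5]
      ring
    rwa [hsum] at h2
  obtain ⟨C0, hC0def⟩ : ∃ x : _, x = M * (5/2)^6 := ⟨_, rfl⟩
  have herr : ∀ h : ℝ, 0 < h → h ≤ 1/3 → ∀ j : ℝ, |j| ≤ 2 →
      |cellAvg v x₀ h j - cellAvg T x₀ h j| ≤ C0 * h^6 := by
    intro h h0 h1 j hj
    have := stmt16_cell_err v T hv.continuous hTcont x₀ M htay j hj h h0 h1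
    calc |cellAvg v x₀ h j - cellAvg T x₀ h j| ≤ M * (5/2)^6 * h^6 := this
      _ = C0 * h^6 := by rw [hC0def]
  have hC0 : 0 ≤ C0 := by
    have h2 := herr (1/3) (by norm_num) (le_refl _) 0 (by norm_num)
    have h3 := abs_nonneg (cellAvg v x₀ (1/3) 0 - cellAvg T x₀ (1/3) 0)
    nlinarith [h2, h3]
  -- exact cell averages of the Taylor polynomial
  obtain ⟨AP, hAPdef⟩ : ∃ x : ℝ → ℝ → ℝ, x = fun j h => c0 + c1*(j*h) + c2*((j^2 + 1/12)*h^2)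
      + c3*((j^3 + j/4)*h^3) + c4*((j^4 + j^2/2 + 1/80)*h^4)
      + c5*((j^5 + (5/6)*j^3 + j/16)*h^5) := ⟨_, rfl⟩
  have hTval : ∀ h : ℝ, h ≠ 0 → ∀ j : ℝ, cellAvg T x₀ h j = AP j h := by
    intro h hh j
    rw [hTdef, stmt16_cellAvg_poly, hAPdef]
    simp only
    field_simp
    ring
  -- combined error bound
  have hcell : ∀ h : ℝ, 0 < h → h ≤ 1/3 → ∀ j : ℝ, |j| ≤ 2 →
      |cellAvg v x₀ h j - AP j h| ≤ C0 * h^6 := by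
    intro h h0 h1 j hj
    have := herr h h0 h1 j hj
    rwa [hTval h (ne_of_gt h0) j] at this
  obtain ⟨m, hmdef⟩ : ∃ x : _, x = |c1| := ⟨_, rfl⟩
  have hm : 0 < m := by rw [hmdef]; exact abs_pos.mpr hx
  -- the polynomial building blocks
  obtain ⟨Pa0, hPa0⟩ : ∃ x : ℝ → ℝ, x = fun h => 2*c2 - 6*c3*h + 15*c4*h^2 - 35*c5*h^3 := ⟨_, rfl⟩
  obtain ⟨Pa2, hPa2⟩ : ∃ x : ℝ → ℝ, x = fun h => 2*c2 + 6*c3*h + 15*c4*h^2 + 35*c5*h^3 := ⟨_, rfl⟩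
  obtain ⟨Pb0, hPb0⟩ : ∃ x : ℝ → ℝ, x = fun h => 2*c1 - (7/2)*c3*h^2 + 12*c4*h^3 - (749/24)*c5*h^4 := ⟨_, rfl⟩
  obtain ⟨Pb1, hPb1⟩ : ∃ x : ℝ → ℝ, x = fun h => -2*c1 - (5/2)*c3*h^2 - (91/24)*c5*h^4 := ⟨_, rfl⟩
  obtain ⟨Pb2, hPb2⟩ : ∃ x : ℝ → ℝ, x = fun h => -2*c1 + (7/2)*c3*h^2 + 12*c4*h^3 + (749/24)*c5*h^4 := ⟨_, rfl⟩
  obtain ⟨Q, hQ⟩ : ∃ x : ℝ → ℝ, x = fun h => 24*c1*c4 - 52*c2*c3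
      + (-432*c3*c4 - (910/3)*c2*c5)*h^2 + (-(5299/2)*c4*c5)*h^4 := ⟨_, rfl⟩
  obtain ⟨Ca, hCa⟩ : ∃ x : _, x = 2*|c2| + 6*|c3| + 15*|c4| + 35*|c5| + 1 := ⟨_, rfl⟩
  obtain ⟨Cb, hCb⟩ : ∃ x : _, x = 2*|c1| + 4*|c3| + 13*|c4| + 32*|c5| + 1 := ⟨_, rfl⟩
  obtain ⟨CQ, hCQ⟩ : ∃ x : _, x = |24*c1*c4 - 52*c2*c3| + 1 := ⟨_, rfl⟩
  obtain ⟨Ct, hCt⟩ : ∃ x : _, x = CQ + 1 := ⟨_, rfl⟩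
  obtain ⟨V, hV⟩ : ∃ x : ℝ → ℝ, x = fun h => (26/3)*C0*(2*Ca*h^2 + 4*C0*h^6) + 4*C0*(2*Cb*h + 8*C0*h^6) := ⟨_, rfl⟩
  -- key algebraic identities
  have idA0 : ∀ h : ℝ, AP (-2) h - 2*AP (-1) h + AP 0 h = h^2 * Pa0 h := by
    intro h; simp only [hAPdef, hPa0]; norm_num; ring
  have idA2 : ∀ h : ℝ, AP 0 h - 2*AP 1 h + AP 2 h = h^2 * Pa2 h := by
    intro h; simp only [hAPdef, hPa2]; norm_num; ring
  have idB0 : ∀ h : ℝ, AP (-2) h - 4*AP (-1) h + 3*AP 0 h = h * Pb0 h := by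
    intro h; simp only [hAPdef, hPb0]; norm_num; ring
  have idB1 : ∀ h : ℝ, AP (-1) h - AP 1 h = h * Pb1 h := by
    intro h; simp only [hAPdef, hPb1]; norm_num; ring
  have idB2 : ∀ h : ℝ, 3*AP 0 h - 4*AP 1 h + AP 2 h = h * Pb2 h := by
    intro h; simp only [hAPdef, hPb2]; norm_num; ring
  have idQ : ∀ h : ℝ, 13/12*((h^2*Pa0 h)^2 - (h^2*Pa2 h)^2)
      + 1/4*((h*Pb0 h)^2 - (h*Pb2 h)^2) = h^5 * Q h := by
    intro h; simp only [hPa0, hPa2, hPb0, hPb2, hQ]; ring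
  -- eventual facts
  have hTendsto : ∀ p : ℝ → ℝ, Continuous p → Filter.Tendsto p L (𝓝 (p 0)) :=
    fun p hp => (hp.tendsto 0).mono_left nhdsWithin_le_nhds
  have evh : ∀ᶠ h : ℝ in L, 0 < h := self_mem_nhdsWithin
  have ev13 : ∀ᶠ h : ℝ in L, h < 1/3 :=
    (hTendsto (fun h => h) continuous_id).eventually_lt_const (by norm_num)
  have evb0lo : ∀ᶠ h : ℝ in L, (3/2)*m < |Pb0 h| := by
    have hc : Continuous Pb0 := by rw [hPb0]; fun_prop
    refine ((hTendsto Pb0 hc).abs).eventually_const_lt ?_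
    have : Pb0 0 = 2*c1 := by simp [hPb0]
    rw [this, abs_mul, abs_two]
    rw [hmdef] at hm ⊢
    linarith only [hm]
  have evb1lo : ∀ᶠ h : ℝ in L, (3/2)*m < |Pb1 h| := by
    have hc : Continuous Pb1 := by rw [hPb1]; fun_prop
    refine ((hTendsto Pb1 hc).abs).eventually_const_lt ?_
    have : Pb1 0 = -(2*c1) := by simp [hPb1]; try ring
    rw [this, abs_neg, abs_mul, abs_two]
    rw [hmdef] at hm ⊢
    linarith only [hm]
  have evb2lo : ∀ᶠ h : ℝ in L, (3/2)*m < |Pb2 h| := by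
    have hc : Continuous Pb2 := by rw [hPb2]; fun_prop
    refine ((hTendsto Pb2 hc).abs).eventually_const_lt ?_
    have : Pb2 0 = -(2*c1) := by simp [hPb2]; try ring
    rw [this, abs_neg, abs_mul, abs_two]
    rw [hmdef] at hm ⊢
    linarith only [hm]
  have evErr : ∀ᶠ h : ℝ in L, 8*C0*h^5 < (1/2)*m := by
    have hc : Continuous (fun h : ℝ => 8*C0*h^5) := by fun_prop
    refine (hTendsto _ hc).eventually_lt_const ?_
    simp only [ne_eq, OfNat.ofNat_ne_zero, not_false_eq_true, zero_pow, mul_zero]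
    linarith only [hm]
  have evQ : ∀ᶠ h : ℝ in L, |Q h| < CQ := by
    have hc : Continuous Q := by rw [hQ]; fun_prop
    refine ((hTendsto Q hc).abs).eventually_lt_const ?_
    have : Q 0 = 24*c1*c4 - 52*c2*c3 := by simp [hQ]
    rw [this, hCQ]
    linarith
  have evPa0 : ∀ᶠ h : ℝ in L, |Pa0 h| < Ca := by
    have hc : Continuous Pa0 := by rw [hPa0]; fun_prop
    refine ((hTendsto Pa0 hc).abs).eventually_lt_const ?_
    have : Pa0 0 = 2*c2 := by simp [hPa0]
    rw [this, abs_mul, abs_two, hCa]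
    have := abs_nonneg c3; have := abs_nonneg c4; have := abs_nonneg c5
    linarith
  have evPa2 : ∀ᶠ h : ℝ in L, |Pa2 h| < Ca := by
    have hc : Continuous Pa2 := by rw [hPa2]; fun_prop
    refine ((hTendsto Pa2 hc).abs).eventually_lt_const ?_
    have : Pa2 0 = 2*c2 := by simp [hPa2]
    rw [this, abs_mul, abs_two, hCa]
    have := abs_nonneg c3; have := abs_nonneg c4; have := abs_nonneg c5
    linarith
  have evb0hi : ∀ᶠ h : ℝ in L, |Pb0 h| < Cb := by
    have hc : Continuous Pb0 := by rw [hPb0]; fun_prop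
    refine ((hTendsto Pb0 hc).abs).eventually_lt_const ?_
    have : Pb0 0 = 2*c1 := by simp [hPb0]
    rw [this, abs_mul, abs_two, hCb]
    have := abs_nonneg c3; have := abs_nonneg c4; have := abs_nonneg c5
    linarith
  have evb2hi : ∀ᶠ h : ℝ in L, |Pb2 h| < Cb := by
    have hc : Continuous Pb2 := by rw [hPb2]; fun_prop
    refine ((hTendsto Pb2 hc).abs).eventually_lt_const ?_
    have : Pb2 0 = -(2*c1) := by simp [hPb2]; try ring
    rw [this, abs_neg, abs_mul, abs_two, hCb]
    have := abs_nonneg c3; have := abs_nonneg c4; have := abs_nonneg c5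
    linarith
  have evV : ∀ᶠ h : ℝ in L, V h < 1 := by
    have hc : Continuous V := by rw [hV]; fun_prop
    refine (hTendsto V hc).eventually_lt_const ?_
    simp [hV]
    try norm_num
  -- the main eventual estimate
  have evMain : ∀ᶠ h : ℝ in L,
      ((1/4)*m^2*h^2 ≤ beta0 v x₀ h ∧ (1/4)*m^2*h^2 ≤ beta1 v x₀ h
        ∧ (1/4)*m^2*h^2 ≤ beta2 v x₀ h) ∧ tau5 v x₀ h ≤ Ct * h^5 := by
    filter_upwards [evh, ev13, evb0lo, evb1lo, evb2lo, evErr, evQ, evPa0, evPa2,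
      evb0hi, evb2hi, evV] with h h0 h13 hb0lo hb1lo hb2lo hErr hQb hPa0b hPa2b
      hb0hi hb2hi hVb
    have hne : h ≠ 0 := ne_of_gt h0
    have h1 : h ≤ 1 := by linarith only [h13]
    have hE2 := hcell h h0 h13.le (-2) (by norm_num)
    have hE1 := hcell h h0 h13.le (-1) (by norm_num)
    have hE0 := hcell h h0 h13.le 0 (by norm_num)
    have hE1' := hcell h h0 h13.le 1 (by norm_num)
    have hE2' := hcell h h0 h13.le 2 (by norm_num)
    set Bm2 := cellAvg v x₀ h (-2) with hBm2
    set Bm1 := cellAvg v x₀ h (-1) with hBm1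
    set B0 := cellAvg v x₀ h 0 with hB0
    set B1 := cellAvg v x₀ h 1 with hB1
    set B2 := cellAvg v x₀ h 2 with hB2
    -- error bounds for the stencil combinations
    have ea0 : |(Bm2 - 2*Bm1 + B0) - h^2*Pa0 h| ≤ 4*(C0*h^6) := by
      have habs := stmt16_abs_lin3 hE2 hE1 hE0 1 (-2) 1
      have heq : 1*(Bm2 - AP (-2) h) + (-2)*(Bm1 - AP (-1) h) + 1*(B0 - AP 0 h)
          = (Bm2 - 2*Bm1 + B0) - h^2*Pa0 h := by
        linear_combination -(idA0 h)
      rw [heq] at habs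
      calc |(Bm2 - 2*Bm1 + B0) - h^2*Pa0 h| ≤ (|(1:ℝ)| + |(-2:ℝ)| + |(1:ℝ)|) * (C0*h^6) :=
            habs
        _ = 4*(C0*h^6) := by norm_num
    have ea2 : |(B0 - 2*B1 + B2) - h^2*Pa2 h| ≤ 4*(C0*h^6) := by
      have habs := stmt16_abs_lin3 hE0 hE1' hE2' 1 (-2) 1
      have heq : 1*(B0 - AP 0 h) + (-2)*(B1 - AP 1 h) + 1*(B2 - AP 2 h)
          = (B0 - 2*B1 + B2) - h^2*Pa2 h := by
        linear_combination -(idA2 h)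
      rw [heq] at habs
      calc |(B0 - 2*B1 + B2) - h^2*Pa2 h| ≤ (|(1:ℝ)| + |(-2:ℝ)| + |(1:ℝ)|) * (C0*h^6) := habs
        _ = 4*(C0*h^6) := by norm_num
    have eb0 : |(Bm2 - 4*Bm1 + 3*B0) - h*Pb0 h| ≤ 8*(C0*h^6) := by
      have habs := stmt16_abs_lin3 hE2 hE1 hE0 1 (-4) 3
      have heq : 1*(Bm2 - AP (-2) h) + (-4)*(Bm1 - AP (-1) h) + 3*(B0 - AP 0 h)
          = (Bm2 - 4*Bm1 + 3*B0) - h*Pb0 h := by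
        linear_combination -(idB0 h)
      rw [heq] at habs
      calc |(Bm2 - 4*Bm1 + 3*B0) - h*Pb0 h| ≤ (|(1:ℝ)| + |(-4:ℝ)| + |(3:ℝ)|) * (C0*h^6) := habs
        _ = 8*(C0*h^6) := by norm_num
    have eb1 : |(Bm1 - B1) - h*Pb1 h| ≤ 8*(C0*h^6) := by
      have habs := stmt16_abs_lin3 hE1 hE1' hE0 1 (-1) 0
      have heq : 1*(Bm1 - AP (-1) h) + (-1)*(B1 - AP 1 h) + 0*(B0 - AP 0 h)
          = (Bm1 - B1) - h*Pb1 h := by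
        linear_combination -(idB1 h)
      rw [heq] at habs
      calc |(Bm1 - B1) - h*Pb1 h| ≤ (|(1:ℝ)| + |(-1:ℝ)| + |(0:ℝ)|) * (C0*h^6) := habs
        _ ≤ 8*(C0*h^6) := by
            have hp : (0:ℝ) ≤ C0*h^6 := by positivity
            norm_num
            linarith only [hp]
    have eb2 : |(3*B0 - 4*B1 + B2) - h*Pb2 h| ≤ 8*(C0*h^6) := by
      have habs := stmt16_abs_lin3 hE0 hE1' hE2' 3 (-4) 1
      have heq : 3*(B0 - AP 0 h) + (-4)*(B1 - AP 1 h) + 1*(B2 - AP 2 h)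
          = (3*B0 - 4*B1 + B2) - h*Pb2 h := by
        linear_combination -(idB2 h)
      rw [heq] at habs
      calc |(3*B0 - 4*B1 + B2) - h*Pb2 h| ≤ (|(3:ℝ)| + |(-4:ℝ)| + |(1:ℝ)|) * (C0*h^6) := habs
        _ = 8*(C0*h^6) := by norm_num
    -- smallness of the error relative to m*h
    have hsmall : 8*(C0*h^6) ≤ (1/2)*m*h := by
      have : 8*C0*h^5 ≤ (1/2)*m := le_of_lt hErr
      calc 8*(C0*h^6) = (8*C0*h^5)*h := by ring
        _ ≤ ((1/2)*m)*h := mul_le_mul_of_nonneg_right this h0.le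
        _ = (1/2)*m*h := by ring
    -- lower bounds for the β's
    have lower : ∀ bv : ℝ, ∀ P : ℝ → ℝ, ((3/2)*m < |P h|) → (|bv - h*P h| ≤ 8*(C0*h^6)) →
        m*h ≤ |bv| := by
      intro bv P hPlo hbv
      have l1 : (3/2)*m*h ≤ |h*P h| := by
        rw [abs_mul, abs_of_pos h0]
        calc (3/2)*m*h = h*((3/2)*m) := by ring
          _ ≤ h*|P h| := mul_le_mul_of_nonneg_left hPlo.le h0.le
      have l2 : |bv - h*P h| ≤ (1/2)*m*h := le_trans hbv hsmall
      have l3 : |h*P h| - |bv| ≤ |bv - h*P h| := by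
        rw [abs_sub_comm]
        exact abs_sub_abs_le_abs_sub _ _
      linarith only [l1, l2, l3]
    have hb0m : m*h ≤ |Bm2 - 4*Bm1 + 3*B0| := lower _ Pb0 hb0lo eb0
    have hb1m : m*h ≤ |Bm1 - B1| := lower _ Pb1 hb1lo eb1
    have hb2m : m*h ≤ |3*B0 - 4*B1 + B2| := lower _ Pb2 hb2lo eb2
    have sqlow : ∀ x : ℝ, m*h ≤ |x| → (1/4)*m^2*h^2 ≤ (1/4)*x^2 := by
      intro x hxm
      have h1 : (m*h)^2 ≤ |x|^2 := pow_le_pow_left₀ (by positivity) hxm 2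
      rw [sq_abs] at h1
      nlinarith only [h1]
    constructor
    · refine ⟨?_, ?_, ?_⟩
      · have h2 := sqlow _ hb0m
        simp only [beta0]
        rw [← hBm2, ← hBm1, ← hB0]
        linarith only [h2, sq_nonneg (Bm2 - 2*Bm1 + B0)]
      · have h2 := sqlow _ hb1m
        simp only [beta1]
        rw [← hBm1, ← hB0, ← hB1]
        linarith only [h2, sq_nonneg (Bm1 - 2*B0 + B1)]
      · have h2 := sqlow _ hb2m
        simp only [beta2]
        rw [← hB0, ← hB1, ← hB2]
        linarith only [h2, sq_nonneg (B0 - 2*B1 + B2)]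
    -- the τ₅ bound
    · have hCah : |h^2*Pa0 h| ≤ Ca*h^2 := by
        rw [abs_mul, abs_of_nonneg (by positivity : (0:ℝ) ≤ h^2)]
        nlinarith [abs_nonneg (Pa0 h)]
      have hCah2 : |h^2*Pa2 h| ≤ Ca*h^2 := by
        rw [abs_mul, abs_of_nonneg (by positivity : (0:ℝ) ≤ h^2)]
        calc h^2*|Pa2 h| ≤ h^2*Ca := mul_le_mul_of_nonneg_left hPa2b.le (by positivity)
          _ = Ca*h^2 := by ring
      have hCbh0 : |h*Pb0 h| ≤ Cb*h := by
        rw [abs_mul, abs_of_pos h0]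
        calc h*|Pb0 h| ≤ h*Cb := mul_le_mul_of_nonneg_left hb0hi.le h0.le
          _ = Cb*h := by ring
      have hCbh2 : |h*Pb2 h| ≤ Cb*h := by
        rw [abs_mul, abs_of_pos h0]
        calc h*|Pb2 h| ≤ h*Cb := mul_le_mul_of_nonneg_left hb2hi.le h0.le
          _ = Cb*h := by ring
      have da0 : |(Bm2 - 2*Bm1 + B0)^2 - (h^2*Pa0 h)^2|
          ≤ (4*(C0*h^6))*(2*(Ca*h^2) + 4*(C0*h^6)) := by
        have := stmt16_sq_perturb hCah ea0
        have heq : h^2*Pa0 h + ((Bm2 - 2*Bm1 + B0) - h^2*Pa0 h) = Bm2 - 2*Bm1 + B0 := by ring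
        rwa [heq] at this
      have da2 : |(B0 - 2*B1 + B2)^2 - (h^2*Pa2 h)^2|
          ≤ (4*(C0*h^6))*(2*(Ca*h^2) + 4*(C0*h^6)) := by
        have := stmt16_sq_perturb hCah2 ea2
        have heq : h^2*Pa2 h + ((B0 - 2*B1 + B2) - h^2*Pa2 h) = B0 - 2*B1 + B2 := by ring
        rwa [heq] at this
      have db0 : |(Bm2 - 4*Bm1 + 3*B0)^2 - (h*Pb0 h)^2|
          ≤ (8*(C0*h^6))*(2*(Cb*h) + 8*(C0*h^6)) := by
        have := stmt16_sq_perturb hCbh0 eb0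
        have heq : h*Pb0 h + ((Bm2 - 4*Bm1 + 3*B0) - h*Pb0 h) = Bm2 - 4*Bm1 + 3*B0 := by ring
        rwa [heq] at this
      have db2 : |(3*B0 - 4*B1 + B2)^2 - (h*Pb2 h)^2|
          ≤ (8*(C0*h^6))*(2*(Cb*h) + 8*(C0*h^6)) := by
        have := stmt16_sq_perturb hCbh2 eb2
        have heq : h*Pb2 h + ((3*B0 - 4*B1 + B2) - h*Pb2 h) = 3*B0 - 4*B1 + B2 := by ring
        rwa [heq] at this
      -- decomposition of β₀ − β₂
      have hdecomp : beta0 v x₀ h - beta2 v x₀ h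
          = h^5 * Q h
            + (13/12*(((Bm2 - 2*Bm1 + B0)^2 - (h^2*Pa0 h)^2)
                - ((B0 - 2*B1 + B2)^2 - (h^2*Pa2 h)^2))
              + 1/4*(((Bm2 - 4*Bm1 + 3*B0)^2 - (h*Pb0 h)^2)
                - ((3*B0 - 4*B1 + B2)^2 - (h*Pb2 h)^2))) := by
        simp only [beta0, beta2]
        rw [← hBm2, ← hBm1, ← hB0, ← hB1, ← hB2]
        linear_combination idQ h
      have hVbound : (13/6)*((4*(C0*h^6))*(2*(Ca*h^2) + 4*(C0*h^6)))
          + (1/2)*((8*(C0*h^6))*(2*(Cb*h) + 8*(C0*h^6))) = h^6 * V h := by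
        rw [hV]; ring
      have habs2 : |beta0 v x₀ h - beta2 v x₀ h| ≤ h^5*|Q h| + h^6*V h := by
        rw [hdecomp]
        calc |h^5 * Q h + (13/12*(((Bm2 - 2*Bm1 + B0)^2 - (h^2*Pa0 h)^2)
                - ((B0 - 2*B1 + B2)^2 - (h^2*Pa2 h)^2))
              + 1/4*(((Bm2 - 4*Bm1 + 3*B0)^2 - (h*Pb0 h)^2)
                - ((3*B0 - 4*B1 + B2)^2 - (h*Pb2 h)^2)))|
            ≤ |h^5 * Q h| + |13/12*(((Bm2 - 2*Bm1 + B0)^2 - (h^2*Pa0 h)^2)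
                - ((B0 - 2*B1 + B2)^2 - (h^2*Pa2 h)^2))
              + 1/4*(((Bm2 - 4*Bm1 + 3*B0)^2 - (h*Pb0 h)^2)
                - ((3*B0 - 4*B1 + B2)^2 - (h*Pb2 h)^2))| := abs_add_le _ _
          _ ≤ |h^5 * Q h| + (13/12*(|(Bm2 - 2*Bm1 + B0)^2 - (h^2*Pa0 h)^2|
                + |(B0 - 2*B1 + B2)^2 - (h^2*Pa2 h)^2|)
              + 1/4*(|(Bm2 - 4*Bm1 + 3*B0)^2 - (h*Pb0 h)^2|
                + |(3*B0 - 4*B1 + B2)^2 - (h*Pb2 h)^2|)) := by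
              have t1 := abs_add_le (13/12*(((Bm2 - 2*Bm1 + B0)^2 - (h^2*Pa0 h)^2)
                - ((B0 - 2*B1 + B2)^2 - (h^2*Pa2 h)^2)))
                (1/4*(((Bm2 - 4*Bm1 + 3*B0)^2 - (h*Pb0 h)^2)
                - ((3*B0 - 4*B1 + B2)^2 - (h*Pb2 h)^2)))
              have t2 := abs_sub ((Bm2 - 2*Bm1 + B0)^2 - (h^2*Pa0 h)^2)
                ((B0 - 2*B1 + B2)^2 - (h^2*Pa2 h)^2)
              have t3 := abs_sub ((Bm2 - 4*Bm1 + 3*B0)^2 - (h*Pb0 h)^2)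
                ((3*B0 - 4*B1 + B2)^2 - (h*Pb2 h)^2)
              rw [abs_mul (13/12 : ℝ), abs_mul (1/4 : ℝ),
                abs_of_pos (show (0:ℝ) < 13/12 by norm_num),
                abs_of_pos (show (0:ℝ) < 1/4 by norm_num)] at t1
              linarith only [t1, t2, t3]
          _ ≤ |h^5 * Q h| + ((13/6)*((4*(C0*h^6))*(2*(Ca*h^2) + 4*(C0*h^6)))
              + (1/2)*((8*(C0*h^6))*(2*(Cb*h) + 8*(C0*h^6)))) := by
              linarith only [da0, da2, db0, db2]
          _ = h^5*|Q h| + h^6*V h := by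
              rw [hVbound, abs_mul, abs_of_nonneg (by positivity : (0:ℝ) ≤ h^5)]
      show tau5 v x₀ h ≤ Ct * h^5
      simp only [tau5]
      calc |beta0 v x₀ h - beta2 v x₀ h| ≤ h^5*|Q h| + h^6*V h := habs2
        _ ≤ h^5*CQ + h^5*1 := by
            have p5 : (0:ℝ) < h^5 := by positivity
            have p6 : h^6*V h ≤ h^5 := by
              have q1 : h^6*V h ≤ h^6*1 :=
                mul_le_mul_of_nonneg_left hVb.le (pow_pos h0 6).le
              have h65 : h^6 ≤ h^5 := by
                calc h^6 = h^5*h := by ring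
                  _ ≤ h^5*1 := mul_le_mul_of_nonneg_left h1 (pow_pos h0 5).le
                  _ = h^5 := by ring
              linarith only [q1, h65]
            have p7 : h^5*|Q h| ≤ h^5*CQ :=
              mul_le_mul_of_nonneg_left hQb.le p5.le
            linarith only [p6, p7]
        _ = Ct*h^5 := by rw [hCt]; ring
  -- extract h₀ and conclude
  obtain ⟨u, hu, hsub⟩ := mem_nhdsGT_iff_exists_Ioo_subset.mp evMain
  refine ⟨u, hu, ?_, ?_⟩
  · intro h h0 hhu s
    have hP := hsub ⟨h0, hhu⟩
    have hq : 0 < (1/4)*m^2*h^2 := by positivity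
    fin_cases s
    · simpa [betaV] using lt_of_lt_of_le hq hP.1.1
    · simpa [betaV] using lt_of_lt_of_le hq hP.1.2.1
    · simpa [betaV] using lt_of_lt_of_le hq hP.1.2.2
  · intro s
    rw [Asymptotics.isBigO_iff]
    refine ⟨4*Ct/m^2, ?_⟩
    filter_upwards [evMain, evh] with h hP h0
    have hq : 0 < (1/4)*m^2*h^2 := by positivity
    have hβ0 : 0 < beta0 v x₀ h := lt_of_lt_of_le hq hP.1.1
    have hβ1 : 0 < beta1 v x₀ h := lt_of_lt_of_le hq hP.1.2.1
    have hβ2 : 0 < beta2 v x₀ h := lt_of_lt_of_le hq hP.1.2.2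
    have hτ : 0 ≤ tau5 v x₀ h := abs_nonneg _
    set X := 4*Ct/m^2*h^3 with hX
    have hCtpos : 0 < Ct := by rw [hCt, hCQ]; positivity
    have hub : ∀ β : ℝ, (1/4)*m^2*h^2 ≤ β → tau5 v x₀ h / β ≤ X := by
      intro β hβq
      have h2 : tau5 v x₀ h / β ≤ (Ct*h^5) / ((1/4)*m^2*h^2) :=
        div_le_div₀ (by positivity) hP.2 hq hβq
      calc tau5 v x₀ h / β ≤ (Ct*h^5)/((1/4)*m^2*h^2) := h2
        _ = X := by
            rw [hX]
            have hmne : m ≠ 0 := ne_of_gt hm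
            have hne : h ≠ 0 := ne_of_gt h0
            field_simp
    have hu0 : 0 ≤ tau5 v x₀ h / beta0 v x₀ h := div_nonneg hτ hβ0.le
    have hu1 : 0 ≤ tau5 v x₀ h / beta1 v x₀ h := div_nonneg hτ hβ1.le
    have hu2 : 0 ≤ tau5 v x₀ h / beta2 v x₀ h := div_nonneg hτ hβ2.le
    have hX0 := hub _ hP.1.1
    have hX1 := hub _ hP.1.2.1
    have hX2 := hub _ hP.1.2.2
    fin_cases s
    · simp only [dLin, betaV, Fin.sum_univ_three, Matrix.cons_val_zero, Matrix.cons_val_one,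
        Matrix.head_cons, Matrix.cons_val_two, Matrix.tail_cons, Fin.isValue]
      rw [Real.norm_eq_abs, Real.norm_eq_abs, abs_of_pos (pow_pos h0 3), ← hX]
      exact stmt16_weight_bound (1/10) (3/5) (3/10) _ _ _ X (by norm_num) (by norm_num)
        (by norm_num) (by norm_num) hu0 hu1 hu2 hX0 hX1 hX2
    · simp only [dLin, betaV, Fin.sum_univ_three, Matrix.cons_val_zero, Matrix.cons_val_one,
        Matrix.head_cons, Matrix.cons_val_two, Matrix.tail_cons, Fin.isValue]
      rw [Real.norm_eq_abs, Real.norm_eq_abs, abs_of_pos (pow_pos h0 3), ← hX]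
      rw [show (1/10*(1 + tau5 v x₀ h / beta0 v x₀ h) + 3/5*(1 + tau5 v x₀ h / beta1 v x₀ h)
          + 3/10*(1 + tau5 v x₀ h / beta2 v x₀ h) : ℝ)
        = 3/5*(1 + tau5 v x₀ h / beta1 v x₀ h) + 1/10*(1 + tau5 v x₀ h / beta0 v x₀ h)
          + 3/10*(1 + tau5 v x₀ h / beta2 v x₀ h) from by ring]
      exact stmt16_weight_bound (3/5) (1/10) (3/10) _ _ _ X (by norm_num) (by norm_num)
        (by norm_num) (by norm_num) hu1 hu0 hu2 hX1 hX0 hX2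
    · simp only [dLin, betaV, Fin.sum_univ_three, Matrix.cons_val_zero, Matrix.cons_val_one,
        Matrix.head_cons, Matrix.cons_val_two, Matrix.tail_cons, Fin.isValue]
      rw [Real.norm_eq_abs, Real.norm_eq_abs, abs_of_pos (pow_pos h0 3), ← hX]
      rw [show (1/10*(1 + tau5 v x₀ h / beta0 v x₀ h) + 3/5*(1 + tau5 v x₀ h / beta1 v x₀ h)
          + 3/10*(1 + tau5 v x₀ h / beta2 v x₀ h) : ℝ)
        = 3/10*(1 + tau5 v x₀ h / beta2 v x₀ h) + 3/5*(1 + tau5 v x₀ h / beta1 v x₀ h)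
          + 1/10*(1 + tau5 v x₀ h / beta0 v x₀ h) from by ring]
      exact stmt16_weight_bound (3/10) (3/5) (1/10) _ _ _ X (by norm_num) (by norm_num)
        (by norm_num) (by norm_num) hu2 hu1 hu0 hX2 hX1 hX0
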